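/- (Rådström cancellation) Let A, B, C be nonempty closed bounded convex subsets of a Banach space L. If closure(A + C) = closure(B + C), then A = B. -/

import Mathlib

open Pointwise

lemma radstrom_key {L : Type*} [NormedAddCommGroup L] [NormedSpace ℝ L]
    (A B C : Set L) (hBne : B.Nonempty) (hCne : C.Nonempty)
    (hBcl : IsClosed B) (hCb : Bornology.IsBounded C) (hBc : Convex ℝ B)
    (h : A + C ⊆ closure (B + C)) : A ⊆ B := by
  obtain ⟨R, hR⟩ := hCb.exists_norm_le
  obtain ⟨b₀, hb₀⟩ := hBne
  obtain ⟨c₀, hc₀⟩ := hCne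
  intro a ha
  rw [← hBcl.closure_eq]
  rw [Metric.mem_closure_iff]
  intro δ hδ
  set ε : ℝ := δ / 3 with hε
  have hεpos : 0 < ε := by positivity
  -- main induction
  have step : ∀ n : ℕ, ∃ b c, b ∈ B ∧ c ∈ C ∧
      ‖(n : ℝ) • a + c₀ - ((n : ℝ) • b + c)‖ ≤ n * ε := by
    intro n
    induction n with
    | zero => exact ⟨b₀, c₀, hb₀, hc₀, by simp⟩
    | succ n ih =>
      obtain ⟨b, c, hb, hc, hn⟩ := ih
      have hmem : a + c ∈ closure (B + C) := h (Set.add_mem_add ha hc)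
      rw [Metric.mem_closure_iff] at hmem
      obtain ⟨y, hy, hdy⟩ := hmem ε hεpos
      obtain ⟨b', hb', c', hc', rfl⟩ := hy
      set t : ℝ := (n : ℝ) / (n + 1) with ht
      have hn1 : (0:ℝ) < (n : ℝ) + 1 := by positivity
      have htmem : t • b + (1 - t) • b' ∈ B := by
        refine hBc hb hb' ?_ ?_ (by ring)
        · positivity
        · rw [ht]; rw [sub_nonneg]; exact div_le_one_of_le₀ (by linarith) hn1.le
      refine ⟨t • b + (1 - t) • b', c', htmem, hc', ?_⟩
      have hsm : ((n : ℝ) + 1) • (t • b + (1 - t) • b') = (n : ℝ) • b + b' := by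
        rw [smul_add, smul_smul, smul_smul, ht]
        field_simp
        simp
      have hkey : ((n + 1 : ℕ) : ℝ) • a + c₀ - (((n + 1 : ℕ) : ℝ) • (t • b + (1 - t) • b') + c')
          = ((n : ℝ) • a + c₀ - ((n : ℝ) • b + c)) + ((a + c) - (b' + c')) := by
        push_cast
        rw [hsm]
        module
      rw [hkey]
      calc ‖((n : ℝ) • a + c₀ - ((n : ℝ) • b + c)) + ((a + c) - (b' + c'))‖
          ≤ ‖(n : ℝ) • a + c₀ - ((n : ℝ) • b + c)‖ + ‖(a + c) - (b' + c')‖ := norm_add_le _ _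
        _ ≤ n * ε + ε := by
            refine add_le_add hn ?_
            rw [← dist_eq_norm]
            exact hdy.le
        _ = (n + 1 : ℕ) * ε := by push_cast; ring
  -- choose n large
  have hR0 : 0 ≤ R := le_trans (norm_nonneg c₀) (hR c₀ hc₀)
  obtain ⟨n, hnlarge⟩ := exists_nat_gt ((2 * R + 1) / ε)
  have hnpos : 0 < (n : ℝ) :=
    lt_of_le_of_lt (div_nonneg (by linarith) hεpos.le) hnlarge
  obtain ⟨b, c, hb, hc, hn⟩ := step n
  refine ⟨b, hb, ?_⟩
  have hab : a - b = ((n : ℝ))⁻¹ • ((n : ℝ) • a + c₀ - ((n : ℝ) • b + c)) + ((n : ℝ))⁻¹ • (c - c₀) := by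
    rw [smul_sub, smul_add, smul_add, inv_smul_smul₀ hnpos.ne', inv_smul_smul₀ hnpos.ne',
      smul_sub]
    module
  have : ‖a - b‖ ≤ ε + 2 * R / n := by
    rw [hab]
    calc ‖_ + _‖ ≤ ‖((n : ℝ))⁻¹ • ((n : ℝ) • a + c₀ - ((n : ℝ) • b + c))‖
          + ‖((n : ℝ))⁻¹ • (c - c₀)‖ := norm_add_le _ _
      _ ≤ ((n : ℝ))⁻¹ * (n * ε) + ((n : ℝ))⁻¹ * (‖c‖ + ‖c₀‖) := by
          refine add_le_add ?_ ?_
          · rw [norm_smul, norm_inv, Real.norm_natCast]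
            exact mul_le_mul_of_nonneg_left hn (by positivity)
          · rw [norm_smul, norm_inv, Real.norm_natCast]
            exact mul_le_mul_of_nonneg_left (norm_sub_le _ _) (by positivity)
      _ ≤ ε + 2 * R / n := by
          rw [inv_mul_cancel_left₀ hnpos.ne']
          refine add_le_add le_rfl ?_
          rw [div_eq_inv_mul]
          refine mul_le_mul_of_nonneg_left ?_ (by positivity)
          have := hR c hc
          have := hR c₀ hc₀
          linarith
  have h2Rn : 2 * R / n < ε := by
    rw [div_lt_iff₀ hnpos]
    have : (2 * R + 1) / ε < n := hnlarge
    rw [div_lt_iff₀ hεpos] at this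
    linarith [mul_comm ε (n : ℝ)]
  rw [dist_eq_norm]
  calc ‖a - b‖ ≤ ε + 2 * R / n := this
    _ < ε + ε := by linarith
    _ < δ := by rw [hε]; linarith

/-- Rådström cancellation: if `A`, `B`, `C` are nonempty closed bounded convex subsets
of a Banach space `L` and `closure (A + C) = closure (B + C)`, then `A = B`. -/
theorem radstrom_cancellation {L : Type*} [NormedAddCommGroup L] [NormedSpace ℝ L]
    [CompleteSpace L] (A B C : Set L)
    (hAne : A.Nonempty) (hBne : B.Nonempty) (hCne : C.Nonempty)
    (hAcl : IsClosed A) (hBcl : IsClosed B) (hCcl : IsClosed C)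
    (hAb : Bornology.IsBounded A) (hBb : Bornology.IsBounded B)
    (hCb : Bornology.IsBounded C)
    (hAc : Convex ℝ A) (hBc : Convex ℝ B) (hCc : Convex ℝ C)
    (h : closure (A + C) = closure (B + C)) : A = B := by
  apply Set.Subset.antisymm
  · exact radstrom_key A B C hBne hCne hBcl hCb hBc (h ▸ subset_closure)
  · exact radstrom_key B A C hAne hCne hAcl hCb hAc (h ▸ subset_closure)
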